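/- Every f(f+1)-iso-tough graph G admits an (f, f+1)-factor, where f is a nonnegative integer-valued function on V(G); i.e., if for all S ⊆ V(G), ∑_{v isolated in G−S} f(v)(f(v)+1) ≤ |S|, then G has a spanning subgraph F with f(v) ≤ d_F(v) ≤ f(v)+1 for all v. -/

import Mathlib

open Classical Finset

/-- The set of isolated vertices of `G − S`: vertices outside `S` all of whose
neighbors lie in `S`. -/
def SimpleGraph.isoVerts {V : Type*} (G : SimpleGraph V) (S : Finset V) : Set V :=
  {v | v ∉ S ∧ ∀ w, G.Adj v w → w ∈ S}

/-- `iso(G − S)`, the number of isolated vertices of `G − S`. -/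
noncomputable def SimpleGraph.isoCount {V : Type*} (G : SimpleGraph V) (S : Finset V) : ℕ :=
  (G.isoVerts S).ncard

/-- `ω(G − S)`, the number of connected components of `G − S`. -/
noncomputable def SimpleGraph.compCount {V : Type*} (G : SimpleGraph V) (S : Finset V) : ℕ :=
  Nat.card (G.induce ((↑S : Set V)ᶜ)).ConnectedComponent

/-- `G` is `t`-tough: `ω(G−S) ≤ max {1, |S|/t}` for all `S ⊆ V(G)`. -/
def SimpleGraph.IsTough {V : Type*} [Fintype V] (t : ℝ) (G : SimpleGraph V) : Prop :=
  ∀ S : Finset V, (G.compCount S : ℝ) ≤ max 1 ((S.card : ℝ) / t)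

namespace FF1Aux

noncomputable def dA {V : Type*} (A : Finset (Sym2 V)) (v : V) : ℕ :=
  (A.filter (fun e => v ∈ e)).card

inductive AWalk {V : Type*} (G : SimpleGraph V) (A : Finset (Sym2 V)) (u : V) :
    Bool → Finset (Sym2 V) → V → Prop
  | base : AWalk G A u true ∅ u
  | stepS {P : Finset (Sym2 V)} {t w : V} : AWalk G A u true P t → G.Adj t w →
      s(t,w) ∉ A → s(t,w) ∉ P → AWalk G A u false (insert s(t,w) P) w
  | stepT {P : Finset (Sym2 V)} {w x : V} : AWalk G A u false P w → s(w,x) ∈ A →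
      s(w,x) ∉ P → AWalk G A u true (insert s(w,x) P) x

lemma walk_inv {V : Type*} {G : SimpleGraph V} {A : Finset (Sym2 V)} {u : V}
    (hA : ∀ e ∈ A, e ∈ G.edgeSet) :
    ∀ {b P t}, AWalk G A u b P t →
      ∀ v, (((P \ A).filter (fun e => v ∈ e)).card : ℤ)
          - (((P ∩ A).filter (fun e => v ∈ e)).card : ℤ)
        = (if v = u then 1 else 0)
          + (if b then 0 else (if v = t then 1 else 0))
          - (if b then (if v = t then 1 else 0) else 0) := by
  intro b P t h
  induction h with
  | base => intro v; simp
  | @stepS P t w h hadj hnA hnP ih =>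
    intro v
    have htw : t ≠ w := G.ne_of_adj hadj
    have h1 : (insert s(t,w) P) \ A = insert s(t,w) (P \ A) := by
      rw [Finset.insert_sdiff_of_notMem _ hnA]
    have h2 : (insert s(t,w) P) ∩ A = P ∩ A := by
      rw [Finset.insert_inter_of_notMem hnA]
    have h3 : s(t,w) ∉ P \ A := fun hc => hnP (Finset.mem_sdiff.mp hc).1
    rw [h1, h2, Finset.filter_insert]
    by_cases hv : v ∈ s(t,w)
    · rw [if_pos hv, Finset.card_insert_of_notMem (fun hc => h3 (Finset.mem_filter.mp hc).1)]
      have := ih v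
      rcases Sym2.mem_iff.mp hv with rfl | rfl
      · simp only [if_neg (by simpa using htw)] at *
        push_cast; by_cases hvu : v = u <;> simp [hvu] at this ⊢ <;> omega
      · simp only [if_neg (fun hc : v = t => htw hc.symm)] at *
        push_cast
        by_cases hvu : v = u <;> simp [hvu, if_pos rfl] at this ⊢ <;> omega
    · rw [if_neg hv]
      have := ih v
      have hvt : v ≠ t := fun hc => hv (by rw [hc]; exact Sym2.mem_mk_left t w)
      have hvw : v ≠ w := fun hc => hv (by rw [hc]; exact Sym2.mem_mk_right t w)
      simp [hvt, hvw] at this ⊢; omega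
  | @stepT P w x h he hnP ih =>
    intro v
    have hwx : w ≠ x := by
      have := hA _ he
      rw [SimpleGraph.mem_edgeSet] at this
      exact G.ne_of_adj this
    have h1 : (insert s(w,x) P) \ A = P \ A := by
      rw [Finset.insert_sdiff_of_mem _ he]
    have h2 : (insert s(w,x) P) ∩ A = insert s(w,x) (P ∩ A) := by
      rw [Finset.insert_inter_of_mem he]
    have h3 : s(w,x) ∉ P ∩ A := fun hc => hnP (Finset.mem_inter.mp hc).1
    rw [h1, h2, Finset.filter_insert]
    by_cases hv : v ∈ s(w,x)
    · rw [if_pos hv, Finset.card_insert_of_notMem (fun hc => h3 (Finset.mem_filter.mp hc).1)]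
      have := ih v
      rcases Sym2.mem_iff.mp hv with rfl | rfl
      · simp only [if_neg (by simpa using hwx)] at *
        push_cast
        by_cases hvu : v = u <;> simp [hvu, if_pos rfl] at this ⊢ <;> omega
      · simp only [if_neg (fun hc : v = w => hwx hc.symm)] at *
        push_cast
        by_cases hvu : v = u <;> simp [hvu, if_pos rfl] at this ⊢ <;> omega
    · rw [if_neg hv]
      have := ih v
      have hvw : v ≠ w := fun hc => hv (by rw [hc]; exact Sym2.mem_mk_left w x)
      have hvx : v ≠ x := fun hc => hv (by rw [hc]; exact Sym2.mem_mk_right w x)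
      simp [hvw, hvx] at this ⊢; omega

lemma walk_P_sub {V : Type*} {G : SimpleGraph V} {A : Finset (Sym2 V)} {u : V}
    (hA : ∀ e ∈ A, e ∈ G.edgeSet) :
    ∀ {b P t}, AWalk G A u b P t → ∀ e ∈ P, e ∈ G.edgeSet := by
  intro b P t h
  induction h with
  | base => simp
  | @stepS P t w h hadj hnA hnP ih =>
    intro e he
    rcases Finset.mem_insert.mp he with rfl | he
    · exact (SimpleGraph.mem_edgeSet G).mpr hadj
    · exact ih e he
  | @stepT P w x h he' hnP ih =>
    intro e he
    rcases Finset.mem_insert.mp he with rfl | he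
    · exact hA _ he'
    · exact ih e he

/-- Every non-`A` edge of a walk has an endpoint that is `S`-reachable, and every
`A`-edge has an endpoint that is `T`-reachable. -/
lemma walk_edges {V : Type*} {G : SimpleGraph V} {A : Finset (Sym2 V)} {u : V} :
    ∀ {b P t}, AWalk G A u b P t → ∀ e ∈ P,
      (e ∉ A → ∃ w, w ∈ e ∧ ∃ P', AWalk G A u false P' w) ∧
      (e ∈ A → ∃ x, x ∈ e ∧ ∃ P', AWalk G A u true P' x) := by
  intro b P t h
  induction h with
  | base => simp
  | @stepS P t w h hadj hnA hnP ih =>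
    intro e he
    rcases Finset.mem_insert.mp he with rfl | he
    · exact ⟨fun _ => ⟨w, Sym2.mem_mk_right t w, _, h.stepS hadj hnA hnP⟩,
        fun hc => absurd hc hnA⟩
    · exact ih e he
  | @stepT P w x h he' hnP ih =>
    intro e he
    rcases Finset.mem_insert.mp he with rfl | he
    · exact ⟨fun hc => absurd he' hc,
        fun _ => ⟨x, Sym2.mem_mk_right w x, _, h.stepT he' hnP⟩⟩
    · exact ih e he
lemma flip_deg {V : Type*} (A P : Finset (Sym2 V)) (v : V) :
    (dA ((A \ P) ∪ (P \ A)) v : ℤ)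
      = dA A v + ((P \ A).filter (fun e => v ∈ e)).card
        - ((P ∩ A).filter (fun e => v ∈ e)).card := by
  unfold dA
  rw [Finset.filter_union,
    Finset.card_union_of_disjoint
      (Finset.disjoint_filter_filter (disjoint_sdiff_sdiff))]
  have hdecomp : (A.filter (fun e => v ∈ e)).card
      = ((A \ P).filter (fun e => v ∈ e)).card + ((A ∩ P).filter (fun e => v ∈ e)).card := by
    rw [← Finset.card_union_of_disjoint
      (Finset.disjoint_filter_filter (Finset.disjoint_sdiff_inter A P)),
      ← Finset.filter_union, Finset.sdiff_union_inter]
  rw [Finset.inter_comm P A]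
  push_cast [hdecomp]; ring

noncomputable def ddeg {V : Type*} [Fintype V] (G : SimpleGraph V) (S : Finset V) (t : V) : ℕ :=
  (Finset.univ.filter (fun y => G.Adj t y ∧ y ∉ S)).card

section Core
variable {V : Type*} [Fintype V] {G : SimpleGraph V} {f : V → ℕ} {A : Finset (Sym2 V)} {u : V}

noncomputable def cfun (f : V → ℕ) (B : Finset (Sym2 V)) : ℕ :=
  ∑ v, min (dA B v) (f v)

variable (hA : ∀ e ∈ A, e ∈ G.edgeSet) (hfeas : ∀ v, dA A v ≤ f v + 1)
  (hmax : ∀ B : Finset (Sym2 V), (∀ e ∈ B, e ∈ G.edgeSet) → (∀ v, dA B v ≤ f v + 1) →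
    cfun f B ≤ cfun f A)
  (hu : dA A u < f u)

include hA hfeas hmax hu in
lemma reachS_eq : ∀ {P w}, AWalk G A u false P w → dA A w = f w + 1 := by
  intro P w hwalk
  by_contra hcon
  have hw : dA A w ≤ f w := by have := hfeas w; omega
  set A' : Finset (Sym2 V) := (A \ P) ∪ (P \ A) with hA'
  have hA'sub : ∀ e ∈ A', e ∈ G.edgeSet := by
    intro e he
    rcases Finset.mem_union.mp he with he | he
    · exact hA _ (Finset.mem_sdiff.mp he).1
    · exact walk_P_sub hA hwalk _ (Finset.mem_sdiff.mp he).1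
  have hdeg : ∀ v, (dA A' v : ℤ)
      = dA A v + (if v = u then 1 else 0) + (if v = w then 1 else 0) := by
    intro v
    have h1 := flip_deg A P v
    have h2 := walk_inv hA hwalk v
    simp only [Bool.false_eq_true, if_false] at h2
    rw [hA', h1]; omega
  have key : ∀ v, min (dA A v) (f v) ≤ min (dA A' v) (f v) ∧ dA A' v ≤ f v + 1 := by
    intro v
    have h1 := hdeg v
    have h2 := hfeas v
    rcases eq_or_ne v u with rfl | hvu
    · rw [if_pos rfl] at h1
      rcases eq_or_ne v w with rfl | hvw
      · rw [if_pos rfl] at h1; omega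
      · rw [if_neg hvw] at h1; omega
    · rw [if_neg hvu] at h1
      rcases eq_or_ne v w with rfl | hvw
      · rw [if_pos rfl] at h1; omega
      · rw [if_neg hvw] at h1; omega
  have hlt : min (dA A u) (f u) < min (dA A' u) (f u) := by
    have h1 := hdeg u
    rw [if_pos rfl] at h1
    rcases eq_or_ne u w with rfl | hvw
    · rw [if_pos rfl] at h1; omega
    · rw [if_neg hvw] at h1; omega
  have : cfun f A < cfun f A' :=
    Finset.sum_lt_sum (fun v _ => (key v).1) ⟨u, Finset.mem_univ u, hlt⟩
  exact absurd (hmax A' hA'sub (fun v => (key v).2)) (by omega)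

include hA hfeas hmax hu in
lemma reachT_le : ∀ {P t}, AWalk G A u true P t → dA A t ≤ f t := by
  intro P t hwalk
  by_contra hcon
  have ht : dA A t = f t + 1 := by have := hfeas t; omega
  have htu : t ≠ u := by rintro rfl; omega
  set A' : Finset (Sym2 V) := (A \ P) ∪ (P \ A) with hA'
  have hA'sub : ∀ e ∈ A', e ∈ G.edgeSet := by
    intro e he
    rcases Finset.mem_union.mp he with he | he
    · exact hA _ (Finset.mem_sdiff.mp he).1
    · exact walk_P_sub hA hwalk _ (Finset.mem_sdiff.mp he).1
  have hdeg : ∀ v, (dA A' v : ℤ)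
      = dA A v + (if v = u then 1 else 0) - (if v = t then 1 else 0) := by
    intro v
    have h1 := flip_deg A P v
    have h2 := walk_inv hA hwalk v
    simp only [if_true] at h2
    rw [hA', h1]; omega
  have key : ∀ v, min (dA A v) (f v) ≤ min (dA A' v) (f v) ∧ dA A' v ≤ f v + 1 := by
    intro v
    have h1 := hdeg v
    have h2 := hfeas v
    rcases eq_or_ne v u with rfl | hvu
    · rw [if_pos rfl, if_neg (Ne.symm htu)] at h1
      omega
    · rw [if_neg hvu] at h1
      rcases eq_or_ne v t with rfl | hvt
      · rw [if_pos rfl] at h1; omega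
      · rw [if_neg hvt] at h1; omega
  have hlt : min (dA A u) (f u) < min (dA A' u) (f u) := by
    have h1 := hdeg u
    rw [if_pos rfl, if_neg (Ne.symm htu)] at h1
    omega
  have : cfun f A < cfun f A' :=
    Finset.sum_lt_sum (fun v _ => (key v).1) ⟨u, Finset.mem_univ u, hlt⟩
  exact absurd (hmax A' hA'sub (fun v => (key v).2)) (by omega)


set_option maxHeartbeats 2000000 in
include hA hfeas hmax hu in
lemma exists_violator :
    ∃ S T : Finset V, (∀ t ∈ T, t ∉ S) ∧
      ∑ t ∈ T, ddeg G S t + ∑ s ∈ S, (f s + 1) < ∑ t ∈ T, f t := by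
  classical
  set Tfin : Finset V := Finset.univ.filter (fun t => ∃ P, AWalk G A u true P t) with hTdef
  set Sfin : Finset V := Finset.univ.filter (fun w => ∃ P, AWalk G A u false P w) with hSdef
  have hTmem : ∀ {t}, t ∈ Tfin ↔ ∃ P, AWalk G A u true P t := by
    intro t; simp [hTdef]
  have hSmem : ∀ {w}, w ∈ Sfin ↔ ∃ P, AWalk G A u false P w := by
    intro w; simp [hSdef]
  have hTle : ∀ t ∈ Tfin, dA A t ≤ f t := by
    intro t ht; obtain ⟨P, hP⟩ := hTmem.mp ht; exact reachT_le hA hfeas hmax hu hP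
  have hSeq : ∀ s ∈ Sfin, dA A s = f s + 1 := by
    intro s hs; obtain ⟨P, hP⟩ := hSmem.mp hs; exact reachS_eq hA hfeas hmax hu hP
  have hdisj : ∀ v ∈ Tfin, v ∉ Sfin := by
    intro v hv hc
    have := hTle v hv; have := hSeq v hc; omega
  have huT : u ∈ Tfin := hTmem.mpr ⟨∅, AWalk.base⟩
  have closure1 : ∀ t ∈ Tfin, ∀ y, G.Adj t y → y ∉ Sfin → s(t,y) ∈ A := by
    intro t ht y hadj hyS
    obtain ⟨P, hP⟩ := hTmem.mp ht
    by_contra hnA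
    by_cases hmem : s(t,y) ∈ P
    · obtain ⟨w, hwmem, P', hP'⟩ := (walk_edges hP _ hmem).1 hnA
      rcases Sym2.mem_iff.mp hwmem with rfl | rfl
      · exact hdisj w ht (hSmem.mpr ⟨P', hP'⟩)
      · exact hyS (hSmem.mpr ⟨P', hP'⟩)
    · exact hyS (hSmem.mpr ⟨_, hP.stepS hadj hnA hmem⟩)
  have closure2 : ∀ a b, s(a,b) ∈ A → a ∈ Sfin → b ∈ Tfin := by
    intro a b he haS
    obtain ⟨P, hP⟩ := hSmem.mp haS
    by_cases hmem : s(a,b) ∈ P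
    · obtain ⟨x, hxmem, P', hP'⟩ := (walk_edges hP _ hmem).2 he
      rcases Sym2.mem_iff.mp hxmem with rfl | rfl
      · exact absurd haS (hdisj x (hTmem.mpr ⟨P', hP'⟩))
      · exact hTmem.mpr ⟨P', hP'⟩
    · exact hTmem.mpr ⟨_, hP.stepT he hmem⟩
  refine ⟨Sfin, Tfin, fun t ht => hdisj t ht, ?_⟩
  have h1 : ∑ s ∈ Sfin, (f s + 1) = ∑ e ∈ A, (Sfin.filter (fun v => v ∈ e)).card := by
    have hdc : ∑ s ∈ Sfin, (A.filter (fun e => s ∈ e)).card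
        = ∑ e ∈ A, (Sfin.filter (fun v => v ∈ e)).card := by
      simp only [Finset.card_filter]; exact Finset.sum_comm
    rw [← hdc]
    exact Finset.sum_congr rfl (fun s hs => (hSeq s hs).symm)
  have h2 : ∀ t ∈ Tfin, ddeg G Sfin t
      ≤ (A.filter (fun e => t ∈ e ∧ (Sfin.filter (fun v => v ∈ e)).card = 0)).card := by
    intro t ht
    apply Finset.card_le_card_of_injOn (fun y => s(t,y))
    · intro y hy
      rw [Finset.mem_coe, Finset.mem_filter] at hy
      obtain ⟨-, hadj, hyS⟩ := hy
      rw [Finset.mem_coe, Finset.mem_filter]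
      refine ⟨closure1 t ht y hadj hyS, Sym2.mem_mk_left t y, ?_⟩
      rw [Finset.card_eq_zero, Finset.filter_eq_empty_iff]
      intro v hv hvmem
      rcases Sym2.mem_iff.mp hvmem with rfl | rfl
      · exact hdisj v ht hv
      · exact hyS hv
    · intro y1 _ y2 _ hEq
      exact Sym2.congr_right.mp hEq
  have h3 : ∑ t ∈ Tfin,
        (A.filter (fun e => t ∈ e ∧ (Sfin.filter (fun v => v ∈ e)).card = 0)).card
      = ∑ e ∈ A, (Tfin.filter
          (fun t => t ∈ e ∧ (Sfin.filter (fun v => v ∈ e)).card = 0)).card := by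
    simp only [Finset.card_filter]; exact Finset.sum_comm
  have h4 : ∀ e ∈ A,
      (Tfin.filter (fun t => t ∈ e ∧ (Sfin.filter (fun v => v ∈ e)).card = 0)).card
        + (Sfin.filter (fun v => v ∈ e)).card
      ≤ (Tfin.filter (fun v => v ∈ e)).card := by
    intro e he
    by_cases h0 : (Sfin.filter (fun v => v ∈ e)).card = 0
    · rw [h0, Nat.add_zero]
      apply Finset.card_le_card
      intro t ht
      rw [Finset.mem_filter] at ht ⊢
      exact ⟨ht.1, ht.2.1⟩
    · have hTempty : (Tfin.filter
          (fun t => t ∈ e ∧ (Sfin.filter (fun v => v ∈ e)).card = 0)) = ∅ := by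
        rw [Finset.filter_eq_empty_iff]
        intro t _ hc
        exact h0 hc.2
      rw [hTempty, Finset.card_empty, Nat.zero_add]
      obtain ⟨a, ha⟩ := Finset.card_pos.mp (Nat.pos_of_ne_zero h0)
      rw [Finset.mem_filter] at ha
      obtain ⟨haS, hae⟩ := ha
      set b := Sym2.Mem.other hae with hbdef
      have hspec : s(a, b) = e := Sym2.other_spec hae
      have hbT : b ∈ Tfin := closure2 a b (hspec ▸ he) haS
      have hsub : Sfin.filter (fun v => v ∈ e) ⊆ {a} := by
        intro v hv
        rw [Finset.mem_filter] at hv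
        obtain ⟨hvS, hve⟩ := hv
        rw [← hspec] at hve
        rcases Sym2.mem_iff.mp hve with rfl | rfl
        · exact Finset.mem_singleton_self _
        · exact absurd hvS (hdisj _ hbT)
      have hb1 : 1 ≤ (Tfin.filter (fun v => v ∈ e)).card := by
        rw [Nat.one_le_iff_ne_zero, ← Nat.pos_iff_ne_zero, Finset.card_pos]
        exact ⟨b, Finset.mem_filter.mpr ⟨hbT, hspec ▸ Sym2.mem_mk_right a b⟩⟩
      have := Finset.card_le_card hsub
      simp only [Finset.card_singleton] at this
      omega
  have h5 : ∑ e ∈ A, (Tfin.filter (fun v => v ∈ e)).card = ∑ t ∈ Tfin, dA A t := by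
    unfold dA
    simp only [Finset.card_filter]; exact Finset.sum_comm
  have h6 : ∑ t ∈ Tfin, dA A t < ∑ t ∈ Tfin, f t :=
    Finset.sum_lt_sum hTle ⟨u, huT, hu⟩
  calc ∑ t ∈ Tfin, ddeg G Sfin t + ∑ s ∈ Sfin, (f s + 1)
      ≤ (∑ t ∈ Tfin, (A.filter (fun e => t ∈ e ∧
            (Sfin.filter (fun v => v ∈ e)).card = 0)).card)
          + ∑ e ∈ A, (Sfin.filter (fun v => v ∈ e)).card := by
        rw [← h1]; exact Nat.add_le_add_right (Finset.sum_le_sum h2) _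
    _ = ∑ e ∈ A, ((Tfin.filter (fun t => t ∈ e ∧
            (Sfin.filter (fun v => v ∈ e)).card = 0)).card
          + (Sfin.filter (fun v => v ∈ e)).card) := by
        rw [h3, ← Finset.sum_add_distrib]
    _ ≤ ∑ e ∈ A, (Tfin.filter (fun v => v ∈ e)).card := Finset.sum_le_sum h4
    _ = ∑ t ∈ Tfin, dA A t := h5
    _ < ∑ t ∈ Tfin, f t := h6

end Core


section Tough
variable {V : Type*} [Fintype V]

lemma greedy (G : SimpleGraph V) (f : V → ℕ) (S : Finset V) :
    ∀ (n : ℕ) (T : Finset V), T.card ≤ n → (∀ t ∈ T, t ∉ S) →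
    (∀ t ∈ T, ddeg G S t + 1 ≤ f t) →
    ∃ I : Finset V, I ⊆ T ∧ (∀ t ∈ I, ∀ t' ∈ I, ¬ G.Adj t t') ∧
      (∑ t ∈ T, ((f t : ℤ) - ddeg G S t)
        ≤ ∑ t ∈ I, (((f t : ℤ) - ddeg G S t) + ((f t : ℤ) - 1)^2)) := by
  intro n
  induction n with
  | zero =>
    intro T hT _ _
    have : T = ∅ := Finset.card_eq_zero.mp (Nat.le_zero.mp hT)
    subst this
    exact ⟨∅, Finset.Subset.refl _, by simp, by simp⟩
  | succ n ih =>
    intro T hT hTS hTd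
    rcases T.eq_empty_or_nonempty with rfl | hne
    · exact ⟨∅, Finset.Subset.refl _, by simp, by simp⟩
    obtain ⟨t0, ht0T, ht0max⟩ := T.exists_max_image f hne
    set N : Finset V := Finset.univ.filter (fun y => G.Adj t0 y ∧ y ∉ S) with hN
    have hNcard : N.card = ddeg G S t0 := rfl
    set T' : Finset V := T \ insert t0 N with hT'
    have ht0T' : t0 ∉ T' := by
      simp [hT']
    have hT'sub : T' ⊆ T := Finset.sdiff_subset
    have hT'lt : T'.card < T.card :=
      Finset.card_lt_card ⟨hT'sub, fun hc => ht0T' (hc ht0T)⟩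
    obtain ⟨I', hI'sub, hI'adj, hI'sum⟩ := ih T' (by omega)
      (fun t ht => hTS t (hT'sub ht)) (fun t ht => hTd t (hT'sub ht))
    have ht0I' : t0 ∉ I' := fun hc => ht0T' (hI'sub hc)
    refine ⟨insert t0 I', ?_, ?_, ?_⟩
    · intro x hx
      rcases Finset.mem_insert.mp hx with rfl | hx
      · exact ht0T
      · exact hT'sub (hI'sub hx)
    · intro t ht t' ht' hadj
      rcases Finset.mem_insert.mp ht with rfl | htI <;>
        rcases Finset.mem_insert.mp ht' with rfl | ht'I
      · exact G.irrefl hadj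
      · have hmem : t' ∈ N := by
          rw [hN, Finset.mem_filter]
          exact ⟨Finset.mem_univ _, hadj, hTS t' (hT'sub (hI'sub ht'I))⟩
        have := hI'sub ht'I
        rw [hT', Finset.mem_sdiff] at this
        exact this.2 (Finset.mem_insert_of_mem hmem)
      · have hmem : t ∈ N := by
          rw [hN, Finset.mem_filter]
          exact ⟨Finset.mem_univ _, hadj.symm, hTS t (hT'sub (hI'sub htI))⟩
        have := hI'sub htI
        rw [hT', Finset.mem_sdiff] at this
        exact this.2 (Finset.mem_insert_of_mem hmem)
      · exact hI'adj t htI t' ht'I hadj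
    · -- sums
      have hsplit : T = T' ∪ (T ∩ insert t0 N) := by
        rw [hT', Finset.sdiff_union_inter]
      have hdisjU : Disjoint T' (T ∩ insert t0 N) := by
        rw [hT']
        exact Finset.disjoint_sdiff_inter T (insert t0 N) |>.mono_right
          (Finset.Subset.refl _)
      have ht0N : t0 ∉ N := by
        simp [hN]
      have hTiN : T ∩ insert t0 N = insert t0 (T ∩ N) := by
        ext x
        simp only [Finset.mem_inter, Finset.mem_insert]
        constructor
        · rintro ⟨hxT, rfl | hxN⟩
          · exact Or.inl rfl
          · exact Or.inr ⟨hxT, hxN⟩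
        · rintro (rfl | ⟨hxT, hxN⟩)
          · exact ⟨ht0T, Or.inl rfl⟩
          · exact ⟨hxT, Or.inr hxN⟩
      have ht0TN : t0 ∉ T ∩ N := fun hc => ht0N (Finset.mem_inter.mp hc).2
      have hmid : ∑ t ∈ T ∩ N, ((f t : ℤ) - ddeg G S t) ≤ ((f t0 : ℤ) - 1)^2 := by
        have hbound : ∀ t ∈ T ∩ N, ((f t : ℤ) - ddeg G S t) ≤ (f t0 : ℤ) - 1 := by
          intro t ht
          obtain ⟨htT, htN⟩ := Finset.mem_inter.mp ht
          rw [hN, Finset.mem_filter] at htN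
          have hft : f t ≤ f t0 := ht0max t htT
          have hd1 : 1 ≤ ddeg G S t := by
            rw [show ddeg G S t = (Finset.univ.filter
                (fun y => G.Adj t y ∧ y ∉ S)).card from rfl]
            refine Nat.one_le_iff_ne_zero.mpr (fun hc => ?_)
            rw [Finset.card_eq_zero, Finset.filter_eq_empty_iff] at hc
            exact hc (Finset.mem_univ t0) ⟨htN.2.1.symm, hTS t0 ht0T⟩
          push_cast; omega
        have hcard : (T ∩ N).card ≤ f t0 - 1 := by
          have h1 : (T ∩ N).card ≤ N.card := Finset.card_le_card Finset.inter_subset_right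
          have h2 := hTd t0 ht0T
          omega
        calc ∑ t ∈ T ∩ N, ((f t : ℤ) - ddeg G S t)
            ≤ (T ∩ N).card • ((f t0 : ℤ) - 1) := Finset.sum_le_card_nsmul _ _ _ hbound
          _ = ((T ∩ N).card : ℤ) * ((f t0 : ℤ) - 1) := by
              rw [nsmul_eq_mul]
          _ ≤ ((f t0 : ℤ) - 1) * ((f t0 : ℤ) - 1) := by
              have h2 := hTd t0 ht0T
              have hge : (0:ℤ) ≤ (f t0 : ℤ) - 1 := by
                have := hTd t0 ht0T; push_cast; omega
              apply mul_le_mul_of_nonneg_right _ hge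
              push_cast at hcard ⊢
              omega
          _ = ((f t0 : ℤ) - 1)^2 := by ring
      rw [hsplit, Finset.sum_union hdisjU, hTiN, Finset.sum_insert ht0TN,
        Finset.sum_insert ht0I']
      have := hI'sum
      omega
end Tough

section NoViol
variable {V : Type*} [Fintype V]

lemma no_violator (G : SimpleGraph V) (f : V → ℕ)
    (hiso : ∀ S : Finset V,
      ∑ v ∈ Finset.univ.filter (fun v => v ∈ G.isoVerts S), f v * (f v + 1) ≤ S.card) :
    ¬ ∃ S T : Finset V, (∀ t ∈ T, t ∉ S) ∧
      ∑ t ∈ T, ddeg G S t + ∑ s ∈ S, (f s + 1) < ∑ t ∈ T, f t := by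
  classical
  rintro ⟨S, T, hd, hv⟩
  set bad : Finset (Finset V × Finset V) :=
    Finset.univ.filter (fun p => (∀ t ∈ p.2, t ∉ p.1) ∧
      ∑ t ∈ p.2, ddeg G p.1 t + ∑ s ∈ p.1, (f s + 1) < ∑ t ∈ p.2, f t) with hbad
  have hbne : bad.Nonempty := ⟨(S, T), by rw [hbad, Finset.mem_filter]; exact ⟨Finset.mem_univ _, hd, hv⟩⟩
  obtain ⟨p0, hp0mem, hp0min⟩ := bad.exists_min_image (fun p => p.2.card) hbne
  obtain ⟨S0, T0⟩ := p0
  rw [hbad, Finset.mem_filter] at hp0mem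
  obtain ⟨-, hd0, hv0⟩ := hp0mem
  dsimp only at hd0 hv0
  have hdd : ∀ t ∈ T0, ddeg G S0 t + 1 ≤ f t := by
    intro t ht
    have hnotbad : (S0, T0.erase t) ∉ bad := by
      intro hc
      have := hp0min _ hc
      simp only at this
      have hlt : (T0.erase t).card < T0.card := Finset.card_erase_lt_of_mem ht
      omega
    rw [hbad, Finset.mem_filter] at hnotbad
    push_neg at hnotbad
    have hineq := hnotbad (Finset.mem_univ _)
      (fun x hx => hd0 x (Finset.mem_of_mem_erase hx))
    simp only [not_lt] at hineq
    have hsplit1 : ∑ x ∈ T0.erase t, ddeg G S0 x + ddeg G S0 t = ∑ x ∈ T0, ddeg G S0 x :=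
      Finset.sum_erase_add _ _ ht
    have hsplit2 : ∑ x ∈ T0.erase t, f x + f t = ∑ x ∈ T0, f x :=
      Finset.sum_erase_add _ _ ht
    omega
  obtain ⟨I, hIsub, hIadj, hIsum⟩ :=
    greedy G f S0 T0.card T0 le_rfl hd0 hdd
  set W : Finset V := S0 ∪ I.biUnion
    (fun t => Finset.univ.filter (fun y => G.Adj t y ∧ y ∉ S0)) with hW
  have hIiso : ∀ t ∈ I, t ∈ G.isoVerts W := by
    intro t ht
    constructor
    · intro hc
      rcases Finset.mem_union.mp hc with hc | hc
      · exact hd0 t (hIsub ht) hc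
      · obtain ⟨t', ht', hmem⟩ := Finset.mem_biUnion.mp hc
        rw [Finset.mem_filter] at hmem
        exact hIadj t' ht' t ht hmem.2.1
    · intro w hadj
      by_cases hwS : w ∈ S0
      · exact Finset.mem_union_left _ hwS
      · refine Finset.mem_union_right _ (Finset.mem_biUnion.mpr ⟨t, ht, ?_⟩)
        rw [Finset.mem_filter]
        exact ⟨Finset.mem_univ _, hadj, hwS⟩
  have h7 : ∑ t ∈ I, f t * (f t + 1)
      ≤ ∑ v ∈ Finset.univ.filter (fun v => v ∈ G.isoVerts W), f v * (f v + 1) := by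
    apply Finset.sum_le_sum_of_subset
    intro t ht
    rw [Finset.mem_filter]
    exact ⟨Finset.mem_univ _, hIiso t ht⟩
  have hWcard : W.card ≤ S0.card + ∑ t ∈ I, ddeg G S0 t := by
    calc W.card ≤ S0.card + (I.biUnion
          (fun t => Finset.univ.filter (fun y => G.Adj t y ∧ y ∉ S0))).card :=
        Finset.card_union_le _ _
      _ ≤ S0.card + ∑ t ∈ I, (Finset.univ.filter (fun y => G.Adj t y ∧ y ∉ S0)).card :=
        Nat.add_le_add_left (Finset.card_biUnion_le) _
      _ = S0.card + ∑ t ∈ I, ddeg G S0 t := rfl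
  have hIneq : ∀ t ∈ I, ddeg G S0 t + 1 ≤ f t := fun t ht => hdd t (hIsub ht)
  have e1 : ∑ t ∈ I, (((f t:ℤ) - ddeg G S0 t) + ((f t:ℤ)-1)^2)
      = (∑ t ∈ I, ((f t:ℤ)*((f t:ℤ)+1)) - ∑ t ∈ I, (ddeg G S0 t:ℤ))
        + ∑ t ∈ I, (1 - 2*(f t:ℤ)) := by
    rw [← Finset.sum_sub_distrib, ← Finset.sum_add_distrib]
    exact Finset.sum_congr rfl (fun t _ => by ring)
  have e2 : ∑ t ∈ I, ((f t:ℤ)*((f t:ℤ)+1)) ≤ (S0.card:ℤ) + ∑ t ∈ I, (ddeg G S0 t:ℤ) := by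
    have hnat : ∑ t ∈ I, f t * (f t + 1) ≤ S0.card + ∑ t ∈ I, ddeg G S0 t :=
      le_trans h7 (le_trans (hiso W) hWcard)
    push_cast
    exact_mod_cast hnat
  have e3 : ∑ t ∈ I, (1 - 2*(f t:ℤ)) ≤ 0 := by
    apply Finset.sum_nonpos
    intro t ht
    have := hIneq t ht
    push_cast
    omega
  have z1 : (∑ t ∈ T0, ((f t:ℤ) - ddeg G S0 t)) ≤ (S0.card:ℤ) := by
    calc ∑ t ∈ T0, ((f t:ℤ) - ddeg G S0 t)
        ≤ ∑ t ∈ I, (((f t:ℤ) - ddeg G S0 t) + ((f t:ℤ)-1)^2) := hIsum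
      _ = (∑ t ∈ I, ((f t:ℤ)*((f t:ℤ)+1)) - ∑ t ∈ I, (ddeg G S0 t:ℤ))
          + ∑ t ∈ I, (1 - 2*(f t:ℤ)) := e1
      _ ≤ (S0.card:ℤ) := by linarith
  have z2 : (S0.card:ℤ) ≤ ∑ s ∈ S0, ((f s:ℤ)+1) := by
    have : ∑ s ∈ S0, (1:ℤ) ≤ ∑ s ∈ S0, ((f s:ℤ)+1) :=
      Finset.sum_le_sum (fun s _ => by omega)
    simpa using this
  have z3 : (∑ t ∈ T0, (ddeg G S0 t:ℤ)) + ∑ s ∈ S0, ((f s:ℤ)+1) < ∑ t ∈ T0, (f t:ℤ) := by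
    exact_mod_cast hv0
  rw [Finset.sum_sub_distrib] at z1
  linarith

end NoViol

lemma degree_fromEdgeSet {V : Type*} [Fintype V] (G : SimpleGraph V) (A : Finset (Sym2 V))
    (hA : ∀ e ∈ A, e ∈ G.edgeSet) (v : V) :
    (SimpleGraph.fromEdgeSet (↑A : Set (Sym2 V))).degree v = dA A v := by
  classical
  have hdeg : (SimpleGraph.fromEdgeSet (↑A : Set (Sym2 V))).degree v
      = ((SimpleGraph.fromEdgeSet (↑A : Set (Sym2 V))).neighborFinset v).card := rfl
  rw [hdeg]
  apply Finset.card_bij (fun w _ => s(v, w))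
  · intro w hw
    rw [SimpleGraph.mem_neighborFinset, SimpleGraph.fromEdgeSet_adj] at hw
    exact Finset.mem_filter.mpr ⟨by exact_mod_cast hw.1, Sym2.mem_mk_left v w⟩
  · intro w1 h1 w2 h2 he
    exact Sym2.congr_right.mp he
  · intro e he
    rw [Finset.mem_filter] at he
    obtain ⟨heA, hve⟩ := he
    refine ⟨Sym2.Mem.other hve, ?_, (Sym2.other_spec hve)⟩
    rw [SimpleGraph.mem_neighborFinset, SimpleGraph.fromEdgeSet_adj]
    refine ⟨by rw [Sym2.other_spec hve]; exact_mod_cast heA, ?_⟩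
    intro hc
    have hes := hA e heA
    have hdiag : e.IsDiag := by
      rw [← Sym2.other_spec hve, ← hc]
      exact Sym2.mk_isDiag_iff.mpr rfl
    exact (SimpleGraph.not_isDiag_of_mem_edgeSet G hes) hdiag

theorem ff1_factor_of_iso_tough' {V : Type*} [Fintype V] (G : SimpleGraph V) (f : V → ℕ)
    (hiso : ∀ S : Finset V,
      ∑ v ∈ Finset.univ.filter (fun v => v ∈ G.isoVerts S), f v * (f v + 1) ≤ S.card) :
    ∃ F : SimpleGraph V, F ≤ G ∧ ∀ v, f v ≤ F.degree v ∧ F.degree v ≤ f v + 1 := by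
  classical
  set cand : Finset (Finset (Sym2 V)) :=
    Finset.univ.filter (fun A => (∀ e ∈ A, e ∈ G.edgeSet) ∧ ∀ v, dA A v ≤ f v + 1)
    with hcand
  have hne : cand.Nonempty := by
    refine ⟨∅, ?_⟩
    rw [hcand, Finset.mem_filter]
    refine ⟨Finset.mem_univ _, by simp, fun v => ?_⟩
    simp [dA]
  obtain ⟨A, hAmem, hAmax⟩ := cand.exists_max_image (cfun f) hne
  rw [hcand, Finset.mem_filter] at hAmem
  obtain ⟨-, hAsub, hAfeas⟩ := hAmem
  have hmax' : ∀ B : Finset (Sym2 V), (∀ e ∈ B, e ∈ G.edgeSet) →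
      (∀ v, dA B v ≤ f v + 1) → cfun f B ≤ cfun f A := by
    intro B h1 h2
    exact hAmax B (by rw [hcand, Finset.mem_filter]; exact ⟨Finset.mem_univ _, h1, h2⟩)
  by_cases hdef : ∃ u, dA A u < f u
  · obtain ⟨u, hu⟩ := hdef
    obtain ⟨S, T, hd, hv⟩ := exists_violator hAsub hAfeas hmax' hu
    exact absurd ⟨S, T, hd, hv⟩ (no_violator G f hiso)
  · push_neg at hdef
    refine ⟨SimpleGraph.fromEdgeSet (↑A : Set (Sym2 V)), ?_, fun v => ?_⟩
    · have h1 : (↑A : Set (Sym2 V)) ⊆ G.edgeSet := fun e he => hAsub e (by exact_mod_cast he)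
      have := SimpleGraph.fromEdgeSet_mono h1
      rwa [SimpleGraph.fromEdgeSet_edgeSet] at this
    · have hd := degree_fromEdgeSet G A hAsub v
      exact ⟨le_of_le_of_eq (hdef v) (by convert hd.symm), le_of_eq_of_le (by convert hd) (hAfeas v)⟩

end FF1Aux

/-- every `f(f+1)`-iso-tough graph admits an `(f, f+1)`-factor: if
`∑_{v isolated in G−S} f(v)(f(v)+1) ≤ |S|` for all `S ⊆ V(G)`, then `G` has a spanning
subgraph `F` with `f(v) ≤ d_F(v) ≤ f(v)+1` for all `v`. -/
theorem ff1_factor_of_iso_tough {V : Type*} [Fintype V] (G : SimpleGraph V) (f : V → ℕ)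
    (hiso : ∀ S : Finset V,
      ∑ v ∈ Finset.univ.filter (fun v => v ∈ G.isoVerts S), f v * (f v + 1) ≤ S.card) :
    ∃ F : SimpleGraph V, F ≤ G ∧ ∀ v, f v ≤ F.degree v ∧ F.degree v ≤ f v + 1 :=
  FF1Aux.ff1_factor_of_iso_tough' G f hiso
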